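/- Let {I_n} be the filtration associated to a covering polyhedron Q(C), with Rees algebra R(F) = ⊕_{n≥0} I_n z^n ⊂ S[z], and let H be the Hilbert basis of the Simis cone SC(Q(C)). Then R(F) equals the semigroup ring K[ℕH] = K[{t^a z^n : (a,n) ∈ ℕH}], and R(F) is a normal, finitely generated K-algebra. -/

import Mathlib

open MvPolynomial

noncomputable section

/-- Membership of a rational point in the covering polyhedron `Q(C) = {x : x ≥ 0, xC ≥ 1}`. -/
def memCP {s m : ℕ} (C : Matrix (Fin s) (Fin m) ℚ) (x : Fin s → ℚ) : Prop :=
  (∀ i, 0 ≤ x i) ∧ ∀ j, 1 ≤ ∑ i, x i * C i j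

/-- The `n`-th ideal of the filtration associated to the covering polyhedron of `C`. -/
def filtIdeal (K : Type*) [Field K] {s m : ℕ} (C : Matrix (Fin s) (Fin m) ℚ) (n : ℕ) :
    Ideal (MvPolynomial (Fin s) K) :=
  if n = 0 then ⊤ else
    Ideal.span { f | ∃ a : Fin s →₀ ℕ,
      f = monomial a 1 ∧ memCP C (fun i => (a i : ℚ) / n) }

/-- An integral vector of `ℝ^{s+1}` lying in the Simis cone `SC(Q(C))`. -/
def memSCZ {s m : ℕ} (C : Matrix (Fin s) (Fin m) ℚ) (p : (Fin s → ℤ) × ℤ) : Prop :=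
  (∀ i, 0 ≤ p.1 i) ∧ 0 ≤ p.2 ∧ ∀ j, (p.2 : ℚ) ≤ ∑ i, (p.1 i : ℚ) * C i j

/-- Membership in the Hilbert basis of the Simis cone. -/
def hilbMem {s m : ℕ} (C : Matrix (Fin s) (Fin m) ℚ) (γ : (Fin s → ℤ) × ℤ) : Prop :=
  γ ≠ 0 ∧ memSCZ C γ ∧
    ¬ ∃ u v : (Fin s → ℤ) × ℤ, memSCZ C u ∧ memSCZ C v ∧ u ≠ 0 ∧ v ≠ 0 ∧ γ = u + v

/-- The monomials `t^a z^n` of `S[z]` whose exponent vector `(a,n)` belongs to the Hilbert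
basis of the Simis cone. -/
def reesGen (K : Type*) [Field K] {s m : ℕ} (C : Matrix (Fin s) (Fin m) ℚ) :
    Set (Polynomial (MvPolynomial (Fin s) K)) :=
  {f | ∃ (a : Fin s →₀ ℕ) (n : ℕ), hilbMem C (fun i => (a i : ℤ), (n : ℤ)) ∧
    f = Polynomial.C (monomial a 1) * Polynomial.X ^ n}


namespace S13
set_option linter.unusedSectionVars false
set_option linter.unusedVariables false



variable {K : Type*} [Field K] {s m : ℕ}

/-- exponent monoid -/
abbrev D (s : ℕ) := Option (Fin s) →₀ ℕ

variable (C : Matrix (Fin s) (Fin m) ℚ)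

def wt (j : Fin m) (d : D s) : ℚ := (∑ i, (d (some i) : ℚ) * C i j) - (d none : ℚ)

lemma wt_zero (j : Fin m) : wt C j 0 = 0 := by simp [wt]

lemma wt_add (j : Fin m) (d e : D s) : wt C j (d + e) = wt C j d + wt C j e := by
  simp only [wt, Finsupp.add_apply, Nat.cast_add]
  rw [show (∑ i : Fin s, ((d (some i) : ℚ) + (e (some i) : ℚ)) * C i j)
      = (∑ i : Fin s, (d (some i) : ℚ) * C i j) + ∑ i : Fin s, (e (some i) : ℚ) * C i j from by
    rw [← Finset.sum_add_distrib]; apply Finset.sum_congr rfl; intro i _; ring]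
  ring

/-- the lattice points of the Simis cone, as an additive submonoid of exponents -/
def TallM : AddSubmonoid (D s) where
  carrier := {d | ∀ j, 0 ≤ wt C j d}
  zero_mem' := fun j => le_of_eq (wt_zero C j).symm
  add_mem' := fun {a b} ha hb j => by rw [wt_add]; exact add_nonneg (ha j) (hb j)

lemma mem_TallM {d : D s} : d ∈ TallM C ↔ ∀ j, 0 ≤ wt C j d := Iff.rfl

/-- subalgebra of polynomials supported in a submonoid of exponents -/
def monoSub (K : Type*) [Field K] {s : ℕ} (M : AddSubmonoid (D s)) :
    Subalgebra K (MvPolynomial (Option (Fin s)) K) where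
  carrier := {f | ∀ d ∈ f.support, d ∈ M}
  mul_mem' := by
    intro p q hp hq d hd
    have := MvPolynomial.support_mul p q hd
    rcases Finset.mem_add.mp this with ⟨a, ha, b, hb, rfl⟩
    exact M.add_mem (hp a ha) (hq b hb)
  add_mem' := by
    intro p q hp hq d hd
    rcases Finset.mem_union.mp (MvPolynomial.support_add hd) with h | h
    · exact hp d h
    · exact hq d h
  algebraMap_mem' := by
    intro k d hd
    have : coeff d (MvPolynomial.C k : MvPolynomial (Option (Fin s)) K) ≠ 0 :=
      MvPolynomial.mem_support_iff.mp hd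
    rw [coeff_C] at this
    have : d = 0 := by by_contra h; exact this (by simp [Ne.symm h])
    rw [this]; exact M.zero_mem

lemma mem_monoSub {M : AddSubmonoid (D s)} {f : MvPolynomial (Option (Fin s)) K} :
    f ∈ monoSub K M ↔ ∀ d ∈ f.support, d ∈ M := Iff.rfl

lemma monomial_mem_adjoin {B : Set (D s)} {d : D s}
    (hd : d ∈ AddSubmonoid.closure B) :
    (monomial d (1:K)) ∈ Algebra.adjoin K ((fun e => monomial e (1:K)) '' B) := by
  induction hd using AddSubmonoid.closure_induction with
  | mem x hx => exact Algebra.subset_adjoin ⟨x, hx, rfl⟩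
  | zero =>
      rw [show (monomial (0 : D s) (1:K)) = 1 from by simp [monomial_zero']]
      exact Subalgebra.one_mem _
  | add x y hx hy ihx ihy =>
      rw [show (monomial (x + y) (1:K)) = monomial x 1 * monomial y 1 from by
        rw [monomial_mul, one_mul]]
      exact Subalgebra.mul_mem _ ihx ihy

lemma adjoin_eq_monoSub {B : Set (D s)} {M : AddSubmonoid (D s)}
    (hBM : B ⊆ M) (hgen : ∀ d ∈ M, d ∈ AddSubmonoid.closure B) :
    Algebra.adjoin K ((fun e => monomial e (1:K)) '' B) = monoSub K M := by
  apply le_antisymm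
  · apply Algebra.adjoin_le
    rintro f ⟨e, he, rfl⟩
    intro d hd
    classical
    rw [support_monomial] at hd
    simp only [one_ne_zero, if_false, Finset.mem_singleton] at hd
    rw [hd]; exact hBM he
  · intro f hf
    rw [as_sum f]
    apply Subalgebra.sum_mem
    intro d hd
    have : (monomial d (coeff d f)) = (coeff d f) • monomial d (1:K) := by
      rw [smul_monomial, smul_eq_mul, mul_one]
    rw [this]
    exact Subalgebra.smul_mem _ (monomial_mem_adjoin (hgen d (hf d hd))) _



section FMsec

variable {ι : Type} [Fintype ι]

/-- dot product on `ι → ℚ` -/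
def dot (v x : ι → ℚ) : ℚ := ∑ o, v o * x o

lemma dot_zero (v : ι → ℚ) : dot v (0 : ι → ℚ) = 0 := by simp [dot]

lemma dot_smul (v : ι → ℚ) (c : ℚ) (y : ι → ℚ) : dot v (c • y) = c * dot v y := by
  simp only [dot, Pi.smul_apply, smul_eq_mul, Finset.mul_sum]
  exact Finset.sum_congr rfl fun o _ => by ring

lemma dot_add (v x y : ι → ℚ) : dot v (x + y) = dot v x + dot v y := by
  simp only [dot, Pi.add_apply, mul_add]
  exact Finset.sum_add_distrib

lemma dot_sub (v x y : ι → ℚ) : dot v (x - y) = dot v x - dot v y := by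
  simp only [dot, Pi.sub_apply, mul_sub]
  exact Finset.sum_sub_distrib _ _

lemma dot_sum (v : ι → ℚ) {κ : Type} [Fintype κ] (f : κ → ι → ℚ) :
    dot v (∑ i, f i) = ∑ i, dot v (f i) := by
  simp only [dot, Finset.sum_apply, Finset.mul_sum]
  exact Finset.sum_comm

/-- `x` is a nonnegative combination of the family `g` -/
def coneComb {κ : Type} [Fintype κ] (g : κ → ι → ℚ) (x : ι → ℚ) : Prop :=
  ∃ lam : κ → ℚ, (∀ i, 0 ≤ lam i) ∧ x = ∑ i, lam i • g i

lemma coneComb_self {κ : Type} [Fintype κ] [DecidableEq κ] (g : κ → ι → ℚ) (i : κ) :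
    coneComb g (g i) := by
  refine ⟨fun k => if k = i then 1 else 0, fun k => by positivity, ?_⟩
  rw [Finset.sum_congr rfl (fun k _ => show (if k = i then (1:ℚ) else 0) • g k
      = if k = i then g i else 0 from by split <;> simp_all)]
  simp

lemma dot_nonneg_of_coneComb {κ : Type} [Fintype κ] {g : κ → ι → ℚ} {x : ι → ℚ}
    (hx : coneComb g x) {v : ι → ℚ} (hv : ∀ i, 0 ≤ dot v (g i)) : 0 ≤ dot v x := by
  obtain ⟨lam, hlam, rfl⟩ := hx
  rw [dot_sum]
  exact Finset.sum_nonneg fun i _ => by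
    rw [dot_smul]; exact mul_nonneg (hlam i) (hv i)

/-- Fourier–Motzkin / Weyl: a finite intersection of halfspaces is a finitely
generated cone. -/
theorem fourier_motzkin (L : List (ι → ℚ)) :
    ∃ (κ : Type) (_ : Fintype κ) (g : κ → ι → ℚ),
      ∀ x, (∀ v ∈ L, 0 ≤ dot v x) ↔ coneComb g x := by
  classical
  induction L with
  | nil =>
      refine ⟨ι ⊕ ι, inferInstance, Sum.elim (fun o => (Pi.single o (1:ℚ) : ι → ℚ))
        (fun o => -(Pi.single o (1:ℚ) : ι → ℚ)), fun x => ?_⟩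
      simp only [List.not_mem_nil, false_implies, implies_true, true_iff]
      refine ⟨Sum.elim (fun o => max (x o) 0) (fun o => max (-(x o)) 0), ?_, ?_⟩
      · rintro (o | o) <;> simp only [Sum.elim_inl, Sum.elim_inr] <;> positivity
      · rw [Fintype.sum_sum_type]
        simp only [Sum.elim_inl, Sum.elim_inr]
        rw [← Finset.sum_add_distrib]
        have key : ∀ o : ι, (max (x o) 0 • (Pi.single o (1:ℚ) : ι → ℚ)
            + max (-(x o)) 0 • (-(Pi.single o (1:ℚ) : ι → ℚ)))
            = (Pi.single o (x o) : ι → ℚ) := by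
          intro o
          funext z
          rcases eq_or_ne z o with rfl | hz
          · simp only [Pi.add_apply, Pi.smul_apply, Pi.neg_apply, Pi.single_eq_same,
              smul_eq_mul, mul_one, mul_neg]
            rcases le_total (x z) 0 with h | h
            · rw [max_eq_right h, max_eq_left (by linarith)]; ring
            · rw [max_eq_left h, max_eq_right (by linarith)]; ring
          · simp [Pi.single_eq_of_ne hz]
        rw [Finset.sum_congr rfl (fun o _ => key o)]
        exact (Finset.univ_sum_single x).symm
  | cons a L ih =>
      obtain ⟨κ, instκ, g, hg⟩ := ih
      set P : κ → Prop := fun i => 0 ≤ dot a (g i) with hP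
      have hgL : ∀ i, ∀ v ∈ L, 0 ≤ dot v (g i) := fun i =>
        (hg (g i)).mpr (coneComb_self g i)
      refine ⟨κ ⊕ κ × κ, inferInstance,
        Sum.elim (fun i => if P i then g i else 0)
          (fun p => if P p.1 ∧ ¬ P p.2 then
            dot a (g p.1) • g p.2 - dot a (g p.2) • g p.1 else 0), fun x => ?_⟩
      set g' := Sum.elim (fun i => if P i then g i else 0)
          (fun p : κ × κ => if P p.1 ∧ ¬ P p.2 then
            dot a (g p.1) • g p.2 - dot a (g p.2) • g p.1 else 0) with hg'
      have hall : ∀ (i' : κ ⊕ κ × κ), ∀ v ∈ a :: L, 0 ≤ dot v (g' i') := by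
        rintro (i | ⟨i, k⟩) v hv
        · simp only [hg', Sum.elim_inl]
          split
          · rcases List.mem_cons.mp hv with rfl | hv'
            · assumption
            · exact hgL i v hv'
          · rw [dot_zero]
        · simp only [hg', Sum.elim_inr]
          split
          · rename_i hik
            rw [dot_sub, dot_smul, dot_smul]
            rcases List.mem_cons.mp hv with rfl | hv'
            · exact le_of_eq (by ring)
            · have h1 : 0 ≤ dot a (g i) := hik.1
              have h2 : dot a (g k) < 0 := lt_of_not_ge hik.2
              have h3 : 0 ≤ dot v (g k) := hgL k v hv'
              have h4 : 0 ≤ dot v (g i) := hgL i v hv'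
              nlinarith
          · rw [dot_zero]
      constructor
      · intro hx
        have hxL : ∀ v ∈ L, 0 ≤ dot v x := fun v hv => hx v (List.mem_cons_of_mem a hv)
        have hxa : 0 ≤ dot a x := hx a List.mem_cons_self
        obtain ⟨lam, hlam, hxe⟩ := (hg x).mp hxL
        set μ : ℚ := ∑ i, if P i then lam i * dot a (g i) else 0 with hμ
        set ν : ℚ := ∑ i, if P i then 0 else -(lam i * dot a (g i)) with hν
        set A : ι → ℚ := ∑ i, if P i then lam i • g i else 0 with hA
        set B : ι → ℚ := ∑ i, if P i then 0 else lam i • g i with hB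
        have hxAB : x = A + B := by
          rw [hxe, hA, hB, ← Finset.sum_add_distrib]
          exact Finset.sum_congr rfl fun i _ => by split <;> simp
        have hμ0 : 0 ≤ μ := Finset.sum_nonneg fun i _ => by
          split
          · exact mul_nonneg (hlam i) (by assumption)
          · exact le_refl 0
        have hν0 : 0 ≤ ν := Finset.sum_nonneg fun i _ => by
          split
          · exact le_refl 0
          · rename_i h
            have : dot a (g i) ≤ 0 := le_of_lt (lt_of_not_ge h)
            have := mul_nonpos_of_nonneg_of_nonpos (hlam i) this
            linarith
        have hdax : dot a x = μ - ν := by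
          rw [hxe, dot_sum, hμ, hν, ← Finset.sum_sub_distrib]
          refine Finset.sum_congr rfl fun i _ => by
            rw [dot_smul]; split <;> ring
        have hνμ : ν ≤ μ := by rw [hdax] at hxa; linarith
        by_cases hc : ν = 0
        · -- all negative-part coefficients vanish
          have hterm : ∀ i ∈ Finset.univ, (0:ℚ) ≤ if P i then 0 else -(lam i * dot a (g i)) := by
            intro i _
            split
            · exact le_refl 0
            · rename_i h
              have : dot a (g i) ≤ 0 := le_of_lt (lt_of_not_ge h)
              have := mul_nonpos_of_nonneg_of_nonpos (hlam i) this
              linarith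
          have hc' : (∑ i, if P i then (0:ℚ) else -(lam i * dot a (g i))) = 0 := by
            rw [← hν]; exact hc
          have hz : ∀ i, ¬ P i → lam i = 0 := by
            intro i hi
            have h0 : (if P i then (0:ℚ) else -(lam i * dot a (g i))) = 0 :=
              (Finset.sum_eq_zero_iff_of_nonneg hterm).mp hc' i (Finset.mem_univ i)
            rw [if_neg hi, neg_eq_zero] at h0
            have hda : dot a (g i) ≠ 0 := fun h => hi (le_of_eq h.symm)
            exact (mul_eq_zero.mp h0).resolve_right hda
          refine ⟨Sum.elim (fun i => if P i then lam i else 0) (fun _ => 0), ?_, ?_⟩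
          · rintro (i | p)
            · simp only [Sum.elim_inl]; split; exacts [hlam i, le_refl 0]
            · simp only [Sum.elim_inr]; exact le_refl 0
          · rw [Fintype.sum_sum_type]
            have h2 : (∑ p : κ × κ, (Sum.elim (fun i => if P i then lam i else 0)
                (fun _ : κ × κ => (0:ℚ)) (Sum.inr p)) • g' (Sum.inr p)) = 0 := by
              apply Finset.sum_eq_zero; intro p _; simp
            rw [h2, add_zero, hxe]
            refine Finset.sum_congr rfl fun i _ => ?_
            simp only [Sum.elim_inl, hg']
            by_cases hPi : P i
            · rw [if_pos hPi, if_pos hPi]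
            · rw [if_neg hPi, if_neg hPi, hz i hPi, zero_smul, zero_smul]
        · have hν' : 0 < ν := lt_of_le_of_ne hν0 (Ne.symm hc)
          have hμ' : 0 < μ := lt_of_lt_of_le hν' hνμ
          have hfrac : 0 ≤ 1 - ν/μ := by
            have : ν/μ ≤ 1 := (div_le_one hμ').mpr hνμ
            linarith
          refine ⟨Sum.elim (fun i => if P i then lam i * (1 - ν/μ) else 0)
            (fun p => if P p.1 ∧ ¬ P p.2 then lam p.1 * lam p.2 / μ else 0), ?_, ?_⟩
          · rintro (i | p)
            · simp only [Sum.elim_inl]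
              split
              · exact mul_nonneg (hlam i) hfrac
              · exact le_refl 0
            · simp only [Sum.elim_inr]
              split
              · exact div_nonneg (mul_nonneg (hlam _) (hlam _)) hμ0
              · exact le_refl 0
          · rw [Fintype.sum_sum_type]
            have hS1 : (∑ i : κ, (Sum.elim (fun i => if P i then lam i * (1 - ν/μ) else 0)
                (fun p : κ × κ => if P p.1 ∧ ¬ P p.2 then lam p.1 * lam p.2 / μ else 0)
                  (Sum.inl i)) • g' (Sum.inl i)) = (1 - ν/μ) • A := by
              rw [hA, Finset.smul_sum]
              refine Finset.sum_congr rfl fun i _ => ?_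
              simp only [Sum.elim_inl, hg']
              by_cases hPi : P i
              · simp only [if_pos hPi]; module
              · simp only [if_neg hPi]; simp
            have hS2 : (∑ p : κ × κ, (Sum.elim (fun i => if P i then lam i * (1 - ν/μ) else 0)
                (fun p : κ × κ => if P p.1 ∧ ¬ P p.2 then lam p.1 * lam p.2 / μ else 0)
                  (Sum.inr p)) • g' (Sum.inr p)) = B + (ν/μ) • A := by
              have step1 : ∀ p : κ × κ, (Sum.elim (fun i => if P i then lam i * (1 - ν/μ) else 0)
                  (fun p : κ × κ => if P p.1 ∧ ¬ P p.2 then lam p.1 * lam p.2 / μ else 0)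
                    (Sum.inr p)) • g' (Sum.inr p)
                  = (if P p.1 ∧ ¬ P p.2 then ((lam p.1 * dot a (g p.1))/μ) • (lam p.2 • g p.2)
                      else 0)
                    - (if P p.1 ∧ ¬ P p.2 then ((lam p.2 * dot a (g p.2))/μ) • (lam p.1 • g p.1)
                      else 0) := by
                intro p
                simp only [Sum.elim_inr, hg']
                by_cases hp : P p.1 ∧ ¬ P p.2
                · simp only [if_pos hp]; module
                · simp only [if_neg hp]; simp
              rw [Finset.sum_congr rfl (fun p _ => step1 p), Finset.sum_sub_distrib]
              have hT1 : (∑ p : κ × κ, if P p.1 ∧ ¬ P p.2 then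
                  ((lam p.1 * dot a (g p.1))/μ) • (lam p.2 • g p.2) else 0) = B := by
                rw [Fintype.sum_prod_type_right]
                -- sum over second coordinate outside
                rw [hB]
                refine Finset.sum_congr rfl fun k _ => ?_
                by_cases hPk : P k
                · rw [if_pos hPk]
                  apply Finset.sum_eq_zero; intro i _
                  rw [if_neg (by tauto)]
                · rw [if_neg hPk]
                  have : ∀ i : κ, (if P i ∧ ¬ P k then
                      ((lam i * dot a (g i))/μ) • (lam k • g k) else 0)
                      = ((if P i then lam i * dot a (g i) else 0)/μ) • (lam k • g k) := by
                    intro i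
                    by_cases hPi : P i
                    · rw [if_pos ⟨hPi, hPk⟩, if_pos hPi]
                    · rw [if_neg (by tauto), if_neg hPi, zero_div, zero_smul]
                  rw [Finset.sum_congr rfl (fun i _ => this i)]
                  rw [show (∑ i : κ, ((if P i then lam i * dot a (g i) else 0)/μ) • (lam k • g k))
                      = ((∑ i : κ, (if P i then lam i * dot a (g i) else 0))/μ) • (lam k • g k) from by
                    rw [Finset.sum_div, Finset.sum_smul]]
                  rw [← hμ, div_self (ne_of_gt hμ'), one_smul]
              have hT2 : (∑ p : κ × κ, if P p.1 ∧ ¬ P p.2 then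
                  ((lam p.2 * dot a (g p.2))/μ) • (lam p.1 • g p.1) else 0) = (-ν/μ) • A := by
                rw [Fintype.sum_prod_type]
                rw [hA, Finset.smul_sum]
                refine Finset.sum_congr rfl fun i _ => ?_
                by_cases hPi : P i
                · rw [if_pos hPi]
                  have : ∀ k : κ, (if P i ∧ ¬ P k then
                      ((lam k * dot a (g k))/μ) • (lam i • g i) else 0)
                      = ((if P k then 0 else lam k * dot a (g k))/μ) • (lam i • g i) := by
                    intro k
                    by_cases hPk : P k
                    · rw [if_neg (by tauto), if_pos hPk, zero_div, zero_smul]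
                    · rw [if_pos ⟨hPi, hPk⟩, if_neg hPk]
                  rw [Finset.sum_congr rfl (fun k _ => this k)]
                  rw [show (∑ k : κ, ((if P k then 0 else lam k * dot a (g k))/μ) • (lam i • g i))
                      = ((∑ k : κ, (if P k then 0 else lam k * dot a (g k)))/μ) • (lam i • g i) from by
                    rw [Finset.sum_div, Finset.sum_smul]]
                  have : (∑ k : κ, (if P k then (0:ℚ) else lam k * dot a (g k))) = -ν := by
                    rw [hν, ← Finset.sum_neg_distrib]
                    refine Finset.sum_congr rfl fun k _ => by split <;> ring
                  rw [this]
                · rw [if_neg hPi, smul_zero]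
                  apply Finset.sum_eq_zero; intro k _
                  rw [if_neg (by tauto)]
              rw [hT1, hT2, neg_div, neg_smul, sub_neg_eq_add]
            rw [hS1, hS2, hxAB]
            module
      · intro hcc v hv
        exact dot_nonneg_of_coneComb hcc (fun i' => hall i' v hv)




end FMsec

/-- constraint vector of column `j` -/
def cvec (j : Fin m) : Option (Fin s) → ℚ := fun o => o.elim (-1) (fun i => C i j)

/-- the list of halfspace normals defining the Simis cone -/
def scL : List (Option (Fin s) → ℚ) :=
  ((Finset.univ : Finset (Option (Fin s))).toList.map
    (fun o => (Pi.single o 1 : Option (Fin s) → ℚ)))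
  ++ ((List.finRange m).map (fun j => cvec C j))

lemma dot_single (o : Option (Fin s)) (x : Option (Fin s) → ℚ) :
    dot (Pi.single o 1 : Option (Fin s) → ℚ) x = x o := by
  classical
  simp only [dot, Pi.single_apply, ite_mul, one_mul, zero_mul]
  rw [Finset.sum_ite_eq' Finset.univ o x]
  simp

lemma mem_scL_iff (x : Option (Fin s) → ℚ) :
    (∀ v ∈ scL C, 0 ≤ dot v x) ↔ ((∀ o, 0 ≤ x o) ∧ ∀ j, 0 ≤ dot (cvec C j) x) := by
  constructor
  · intro h
    refine ⟨fun o => ?_, fun j => ?_⟩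
    · have := h (Pi.single o 1) (by
        apply List.mem_append_left
        exact List.mem_map.mpr ⟨o, by simp [Finset.mem_toList], rfl⟩)
      rwa [dot_single] at this
    · exact h (cvec C j) (by
        apply List.mem_append_right
        exact List.mem_map.mpr ⟨j, List.mem_finRange j, rfl⟩)
  · rintro ⟨h1, h2⟩ v hv
    rcases List.mem_append.mp hv with h | h
    · rcases List.mem_map.mp h with ⟨o, _, rfl⟩
      rw [dot_single]; exact h1 o
    · rcases List.mem_map.mp h with ⟨j, _, rfl⟩
      exact h2 j

def toQ (d : D s) : Option (Fin s) → ℚ := fun o => (d o : ℚ)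

lemma dot_cvec_toQ (j : Fin m) (d : D s) : dot (cvec C j) (toQ d) = wt C j d := by
  rw [dot, Fintype.sum_option]
  simp only [cvec, toQ, Option.elim_none, Option.elim_some, wt]
  rw [show (∑ i : Fin s, C i j * (d (some i) : ℚ)) = ∑ i : Fin s, (d (some i) : ℚ) * C i j from
    Finset.sum_congr rfl fun i _ => mul_comm _ _]
  ring

lemma mem_TallM_iff_scL (d : D s) :
    d ∈ TallM C ↔ (∀ v ∈ scL C, 0 ≤ dot v (toQ d)) := by
  rw [mem_scL_iff, mem_TallM]
  constructor
  · intro h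
    exact ⟨fun o => Nat.cast_nonneg _, fun j => by rw [dot_cvec_toQ]; exact h j⟩
  · rintro ⟨-, h2⟩ j
    rw [← dot_cvec_toQ]; exact h2 j

/-- Gordan: the lattice points of the Simis cone form a finitely generated monoid. -/
theorem tall_fg : ∃ F : Set (D s), F.Finite ∧ AddSubmonoid.closure F = TallM C := by
  classical
  obtain ⟨κ, instκ, g, hgc⟩ := fourier_motzkin (scL C)
  have hgcone : ∀ i, (∀ o, 0 ≤ g i o) ∧ ∀ j, 0 ≤ dot (cvec C j) (g i) :=
    fun i => (mem_scL_iff C (g i)).mp ((hgc (g i)).mpr (coneComb_self g i))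
  set den : κ → ℕ := fun i => ∏ o, (g i o).den with hden
  have hdenpos : ∀ i, 0 < den i := fun i => Finset.prod_pos fun o _ => (g i o).pos
  have hint : ∀ i o, ∃ n : ℕ, (n : ℚ) = (den i : ℚ) * g i o := by
    intro i o
    obtain ⟨k, hk⟩ := Finset.dvd_prod_of_mem (fun o => (g i o).den) (Finset.mem_univ o)
    have hq : g i o * ((g i o).den : ℚ) = ((g i o).num : ℚ) := by
      exact_mod_cast Rat.mul_den_eq_num (g i o)
    have hnum : 0 ≤ (g i o).num := Rat.num_nonneg.mpr ((hgcone i).1 o)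
    have hdq : ((den i : ℕ) : ℚ) = ((g i o).den : ℚ) * (k : ℚ) := by
      rw [hden]; exact_mod_cast hk
    refine ⟨(k * (g i o).num.toNat), ?_⟩
    have hstep : ((den i : ℕ) : ℚ) * g i o = (k : ℚ) * ((g i o) * ((g i o).den : ℚ)) := by
      rw [hdq]; ring
    rw [hstep, hq]
    push_cast
    congr 1
    exact_mod_cast Int.toNat_of_nonneg hnum
  set gN : κ → (Option (Fin s)) → ℕ := fun i o => (hint i o).choose with hgN
  have hgNv : ∀ i o, ((gN i o : ℕ) : ℚ) = (den i : ℚ) * g i o := fun i o => (hint i o).choose_spec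
  set DgN : κ → D s := fun i => Finsupp.equivFunOnFinite.symm (gN i) with hDgN
  have hDgNv : ∀ i o, (DgN i) o = gN i o := fun i o => rfl
  have htoQDgN : ∀ i, toQ (DgN i) = (den i : ℚ) • g i := by
    intro i; funext o
    simp only [toQ, hDgNv, Pi.smul_apply, smul_eq_mul]
    exact hgNv i o
  -- scaled generators are cone combinations of g, hence in the cone
  have hconeDgN : ∀ (lamb : κ → ℚ), (∀ i, 0 ≤ lamb i) →
      ∀ x, x = ∑ i, lamb i • toQ (DgN i) → coneComb g x := by
    intro lamb hl x hx
    refine ⟨fun i => lamb i * den i, fun i => mul_nonneg (hl i) (Nat.cast_nonneg _), ?_⟩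
    rw [hx]
    exact Finset.sum_congr rfl fun i _ => by rw [htoQDgN, smul_smul]
  set M : ℕ := ∑ i, ∑ o, gN i o with hM
  have hgNleM : ∀ i o, gN i o ≤ M := by
    intro i o
    calc gN i o ≤ ∑ o, gN i o := Finset.single_le_sum (fun o _ => Nat.zero_le _) (Finset.mem_univ o)
    _ ≤ M := Finset.single_le_sum (f := fun i => ∑ o, gN i o) (fun i _ => Nat.zero_le _) (Finset.mem_univ i)
  set F : Set (D s) := {d | d ∈ TallM C ∧ ∀ o, d o ≤ M} with hF
  have hFfin : F.Finite := by
    apply Set.Finite.subset (Set.finite_range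
      (fun f : Option (Fin s) → Fin (M+1) => Finsupp.equivFunOnFinite.symm (fun o => (f o : ℕ))))
    rintro d ⟨-, hdM⟩
    refine ⟨fun o => ⟨d o, Nat.lt_succ_of_le (hdM o)⟩, ?_⟩
    apply Finsupp.ext; intro o; rfl
  refine ⟨F, hFfin, le_antisymm (AddSubmonoid.closure_le.mpr (fun d hd => hd.1)) ?_⟩
  -- every lattice point is generated
  suffices H : ∀ N d, (∑ o, d o) = N → d ∈ TallM C → d ∈ AddSubmonoid.closure F by
    intro d hd; exact H _ d rfl hd
  intro N
  induction N using Nat.strong_induction_on with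
  | _ N ih =>
  intro d hNd hd
  obtain ⟨lam, hlam, hxe⟩ := (hgc (toQ d)).mp ((mem_TallM_iff_scL C d).mp hd)
  set lam' : κ → ℚ := fun i => lam i / den i with hlam'
  have hlam'0 : ∀ i, 0 ≤ lam' i := fun i => div_nonneg (hlam i) (Nat.cast_nonneg _)
  have hxe' : toQ d = ∑ i, lam' i • toQ (DgN i) := by
    rw [hxe]
    refine Finset.sum_congr rfl fun i _ => ?_
    rw [htoQDgN, smul_smul, hlam', div_mul_cancel₀]
    exact_mod_cast (hdenpos i).ne'
  by_cases hbig : ∃ i, 1 ≤ lam' i ∧ DgN i ≠ 0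
  · obtain ⟨i₀, hi₀, hDgN0⟩ := hbig
    -- subtract the generator
    set lam'' : κ → ℚ := fun i => lam' i - (if i = i₀ then 1 else 0) with hlam''
    have hlam''0 : ∀ i, 0 ≤ lam'' i := by
      intro i; simp only [hlam'']
      split
      · rename_i h; subst h; linarith
      · simpa using hlam'0 i
    have hsub : ∀ o, (d o : ℚ) - gN i₀ o = ∑ i, lam'' i * gN i o := by
      intro o
      have h1 : (d o : ℚ) = ∑ i, lam' i * gN i o := by
        have := congrFun hxe' o
        simpa [toQ, Finset.sum_apply, Pi.smul_apply, smul_eq_mul, hDgNv] using this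
      rw [h1]
      rw [show (∑ i, lam'' i * gN i o) = ∑ i, (lam' i * gN i o - (if i = i₀ then 1 else 0) * gN i o) from
        Finset.sum_congr rfl fun i _ => by rw [hlam'']; ring]
      rw [Finset.sum_sub_distrib]
      congr 1
      rw [Finset.sum_congr rfl (fun i _ => show ((if i = i₀ then (1:ℚ) else 0) * gN i o)
          = if i = i₀ then (gN i o : ℚ) else 0 from by split <;> simp)]
      rw [Finset.sum_ite_eq' Finset.univ i₀ (fun i => ((gN i o : ℚ)))]
      simp
    have hge : ∀ o, gN i₀ o ≤ d o := by
      intro o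
      have : (0:ℚ) ≤ (d o : ℚ) - gN i₀ o := by
        rw [hsub o]
        exact Finset.sum_nonneg fun i _ =>
          mul_nonneg (hlam''0 i) (Nat.cast_nonneg _)
      have := sub_nonneg.mp this
      exact_mod_cast this
    set d' : D s := Finsupp.equivFunOnFinite.symm (fun o => d o - gN i₀ o) with hd'
    have hd'v : ∀ o, d' o = d o - gN i₀ o := fun o => rfl
    have htqd' : toQ d' = ∑ i, lam'' i • toQ (DgN i) := by
      funext o
      simp only [toQ, hd'v, Finset.sum_apply, Pi.smul_apply, smul_eq_mul]
      rw [Nat.cast_sub (hge o)]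
      exact hsub o
    have hd'T : d' ∈ TallM C := by
      rw [mem_TallM_iff_scL]
      rw [hgc]
      exact hconeDgN lam'' hlam''0 _ htqd'
    have hDgNT : DgN i₀ ∈ F := by
      refine ⟨?_, fun o => hgNleM i₀ o⟩
      rw [mem_TallM_iff_scL, hgc]
      refine hconeDgN (fun i => if i = i₀ then 1 else 0)
        (fun i => by show (0:ℚ) ≤ if i = i₀ then 1 else 0; split <;> norm_num) _ ?_
      rw [Finset.sum_congr rfl (fun i _ => show (if i = i₀ then (1:ℚ) else 0) • toQ (DgN i)
          = if i = i₀ then toQ (DgN i) else 0 from by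
        split
        · rw [one_smul]
        · rw [zero_smul])]
      rw [Finset.sum_ite_eq' Finset.univ i₀ (fun i => toQ (DgN i))]
      simp
    have hsplit : d = d' + DgN i₀ := by
      apply Finsupp.ext; intro o
      simp only [Finsupp.add_apply, hd'v, hDgNv]
      have := hge o
      omega
    have hnorm0 : 1 ≤ ∑ o, (DgN i₀) o := by
      by_contra h
      push_neg at h
      have hsum0 : (∑ o, (DgN i₀) o) = 0 := by omega
      have hall := Finset.sum_eq_zero_iff.mp hsum0
      exact hDgN0 (Finsupp.ext fun o => hall o (Finset.mem_univ o))
    have hlt : (∑ o, d' o) < N := by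
      have : (∑ o, d o) = (∑ o, d' o) + ∑ o, (DgN i₀) o := by
        rw [← Finset.sum_add_distrib]
        exact Finset.sum_congr rfl fun o _ => by
          rw [hd'v, hDgNv]
          have := hge o
          omega
      omega
    have := ih _ hlt d' rfl hd'T
    rw [hsplit]
    exact AddSubmonoid.add_mem _ this (AddSubmonoid.subset_closure hDgNT)
  · -- all coefficients small: d is in the box
    push_neg at hbig
    have hdM : ∀ o, d o ≤ M := by
      intro o
      have h1 : (d o : ℚ) = ∑ i, lam' i * gN i o := by
        have := congrFun hxe' o
        simpa [toQ, Finset.sum_apply, Pi.smul_apply, smul_eq_mul, hDgNv] using this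
      have h2 : (d o : ℚ) ≤ ∑ i, (gN i o : ℚ) := by
        rw [h1]
        apply Finset.sum_le_sum
        intro i _
        by_cases hle : 1 ≤ lam' i
        · have h0 := hbig i hle
          have : gN i o = 0 := by
            have := congrFun (congrArg (fun (x : D s) => (x : Option (Fin s) → ℕ)) h0) o
            simpa [hDgNv] using this
          simp [this]
        · push_neg at hle
          exact mul_le_of_le_one_left (Nat.cast_nonneg _) (le_of_lt hle)
      have h3 : (∑ i, (gN i o : ℚ)) ≤ (M : ℚ) := by
        rw [hM]
        push_cast
        apply Finset.sum_le_sum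
        intro i _
        exact_mod_cast Finset.single_le_sum (f := fun o => ((gN i o : ℕ):ℚ))
          (fun o _ => Nat.cast_nonneg _) (Finset.mem_univ o)
      exact_mod_cast le_trans h2 h3
    exact AddSubmonoid.subset_closure ⟨hd, hdM⟩





/-- the integer pair of an exponent vector -/
def zpair (d : D s) : (Fin s → ℤ) × ℤ := (fun i => (d (some i) : ℤ), (d none : ℤ))

lemma zpair_add (d e : D s) : zpair (d + e) = zpair d + zpair e := by
  unfold zpair
  refine Prod.ext ?_ ?_
  · funext i; simp [Finsupp.add_apply]
  · simp [Finsupp.add_apply]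

lemma zpair_zero : zpair (0 : D s) = 0 := by
  unfold zpair
  refine Prod.ext ?_ ?_
  · funext i; simp
  · simp

lemma zpair_inj {d e : D s} (h : zpair d = zpair e) : d = e := by
  apply Finsupp.ext
  intro o
  cases o with
  | none =>
      have := congrArg Prod.snd h
      simp only [zpair] at this
      exact_mod_cast this
  | some i =>
      have := congrFun (congrArg Prod.fst h) i
      simp only [zpair] at this
      exact_mod_cast this

lemma zpair_eq_zero {d : D s} : zpair d = 0 ↔ d = 0 :=
  ⟨fun h => zpair_inj (h.trans zpair_zero.symm), fun h => h ▸ zpair_zero⟩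

lemma memSCZ_zpair (d : D s) : memSCZ C (zpair d) ↔ d ∈ TallM C := by
  rw [mem_TallM]
  constructor
  · rintro ⟨-, -, h3⟩ j
    have := h3 j
    simp only [zpair] at this
    rw [wt]
    push_cast at this ⊢
    linarith
  · intro h
    refine ⟨fun i => Int.ofNat_nonneg _, Int.ofNat_nonneg _, fun j => ?_⟩
    have := h j
    rw [wt] at this
    simp only [zpair]
    push_cast
    linarith

/-- natural pair from an integral pair with nonnegative entries -/
def dOf (p : (Fin s → ℤ) × ℤ) : D s :=
  Finsupp.equivFunOnFinite.symm (fun o => (o.elim p.2 p.1).toNat)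

lemma zpair_dOf {p : (Fin s → ℤ) × ℤ} (hp : memSCZ C p) : zpair (dOf p) = p := by
  obtain ⟨h1, h2, -⟩ := hp
  unfold zpair dOf
  refine Prod.ext ?_ ?_
  · funext i
    simp only [Finsupp.coe_equivFunOnFinite_symm, Option.elim_some]
    exact Int.toNat_of_nonneg (h1 i)
  · simp only [Finsupp.coe_equivFunOnFinite_symm, Option.elim_none]
    exact Int.toNat_of_nonneg h2

/-- exponent vectors in the Hilbert basis of the Simis cone -/
def hilbSet : Set (D s) := {d | hilbMem C (zpair d)}

lemma normD_pos {d : D s} (hd : d ≠ 0) : 1 ≤ ∑ o, d o := by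
  by_contra h
  push_neg at h
  have hsum0 : (∑ o, d o) = 0 := by omega
  have hall := Finset.sum_eq_zero_iff.mp hsum0
  exact hd (Finsupp.ext fun o => hall o (Finset.mem_univ o))

theorem closure_hilb_eq_tall : AddSubmonoid.closure (hilbSet C) = TallM C := by
  apply le_antisymm
  · exact AddSubmonoid.closure_le.mpr (fun d hd => (memSCZ_zpair C d).mp hd.2.1)
  · intro d hd
    suffices H : ∀ N d, (∑ o, d o) = N → d ∈ TallM C →
        d ∈ AddSubmonoid.closure (hilbSet C) by exact H _ d rfl hd
    clear hd d
    intro N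
    induction N using Nat.strong_induction_on with
    | _ N ih =>
    intro d hNd hd
    by_cases hd0 : d = 0
    · rw [hd0]; exact AddSubmonoid.zero_mem _
    have hSCZ : memSCZ C (zpair d) := (memSCZ_zpair C d).mpr hd
    have hne : zpair d ≠ 0 := fun h => hd0 (zpair_eq_zero.mp h)
    by_cases hh : hilbMem C (zpair d)
    · exact AddSubmonoid.subset_closure hh
    · have hE : ∃ u v : (Fin s → ℤ) × ℤ, memSCZ C u ∧ memSCZ C v ∧ u ≠ 0 ∧ v ≠ 0 ∧
          zpair d = u + v := by
        by_contra hEn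
        exact hh ⟨hne, hSCZ, hEn⟩
      obtain ⟨u, v, hu, hv, hu0, hv0, heq⟩ := hE
      have hzu := zpair_dOf C hu
      have hzv := zpair_dOf C hv
      have hsplit : d = dOf u + dOf v := by
        apply zpair_inj
        rw [zpair_add, hzu, hzv, heq]
      have hduT : dOf u ∈ TallM C := (memSCZ_zpair C _).mp (hzu ▸ hu)
      have hdvT : dOf v ∈ TallM C := (memSCZ_zpair C _).mp (hzv ▸ hv)
      have hdu0 : dOf u ≠ 0 := fun h => hu0 (by rw [← hzu, h, zpair_zero])
      have hdv0 : dOf v ≠ 0 := fun h => hv0 (by rw [← hzv, h, zpair_zero])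
      have hnormsplit : (∑ o, d o) = (∑ o, (dOf u) o) + ∑ o, (dOf v) o := by
        rw [hsplit, ← Finset.sum_add_distrib]
        exact Finset.sum_congr rfl fun o _ => rfl
      have h1 := normD_pos hdu0
      have h2 := normD_pos hdv0
      have hlt1 : (∑ o, (dOf u) o) < N := by omega
      have hlt2 : (∑ o, (dOf v) o) < N := by omega
      rw [hsplit]
      exact AddSubmonoid.add_mem _ (ih _ hlt1 _ rfl hduT) (ih _ hlt2 _ rfl hdvT)




/-- the algebra equivalence `K[x_{none}, x_{some i}] ≃ K[x_i][z]` -/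
abbrev ee (K : Type*) [Field K] (s : ℕ) :
    MvPolynomial (Option (Fin s)) K ≃ₐ[K] Polynomial (MvPolynomial (Fin s) K) :=
  MvPolynomial.optionEquivLeft K (Fin s)

def mk (a : Fin s →₀ ℕ) (n : ℕ) : D s :=
  Finsupp.equivFunOnFinite.symm (fun o => o.elim n a)

def prj (d : D s) : Fin s →₀ ℕ :=
  Finsupp.equivFunOnFinite.symm (fun i => d (some i))

@[simp] lemma mk_some (a : Fin s →₀ ℕ) (n : ℕ) (i : Fin s) : mk a n (some i) = a i := rfl
@[simp] lemma mk_none (a : Fin s →₀ ℕ) (n : ℕ) : mk a n none = n := rfl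
@[simp] lemma prj_apply (d : D s) (i : Fin s) : prj d i = d (some i) := rfl

lemma mk_prj (d : D s) : mk (prj d) (d none) = d := by
  apply Finsupp.ext; intro o; cases o <;> rfl

lemma prj_mk (a : Fin s →₀ ℕ) (n : ℕ) : prj (mk a n) = a := by
  apply Finsupp.ext; intro i; rfl

lemma mk_eq_iff {d : D s} {a : Fin s →₀ ℕ} {n : ℕ} :
    d = mk a n ↔ (prj d = a ∧ d none = n) := by
  constructor
  · rintro rfl; exact ⟨prj_mk a n, rfl⟩
  · rintro ⟨h1, h2⟩
    rw [← h1, ← h2, mk_prj]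

lemma ee_monomial (d : D s) (c : K) :
    ee K s (monomial d c) =
      Polynomial.C (monomial (prj d) c) * Polynomial.X ^ (d none) := by
  induction d using Finsupp.induction generalizing c with
  | zero =>
      rw [show prj (0 : D s) = 0 from by apply Finsupp.ext; intro i; rfl]
      simp only [monomial_zero', Finsupp.coe_zero, Pi.zero_apply, pow_zero, mul_one]
      rw [← MvPolynomial.algebraMap_eq, AlgEquiv.commutes, Polynomial.algebraMap_apply,
        MvPolynomial.algebraMap_eq]
  | single_add o k f hof hk ih =>
      have hsplit : (monomial (Finsupp.single o k + f)) c
          = (monomial (Finsupp.single o k) (1:K)) * monomial f c := by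
        rw [monomial_mul, one_mul]
      rw [hsplit, map_mul, ih]
      rw [show (monomial (Finsupp.single o k) (1:K)) = X o ^ k from X_pow_eq_monomial.symm]
      rw [map_pow]
      cases o with
      | none =>
          rw [optionEquivLeft_X_none]
          rw [show prj (Finsupp.single none k + f) = prj f from by
            apply Finsupp.ext; intro i
            simp [prj, Finsupp.single_apply]]
          rw [show (Finsupp.single (none : Option (Fin s)) k + f) none = k + f none from by
            simp [Finsupp.single_apply]]
          rw [pow_add]
          ring
      | some i =>
          rw [optionEquivLeft_X_some, ← Polynomial.C_pow]
          rw [show prj (Finsupp.single (some i) k + f) = Finsupp.single i k + prj f from by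
            apply Finsupp.ext; intro i'
            simp [prj, Finsupp.single_apply]]
          rw [show (Finsupp.single (some i : Option (Fin s)) k + f) none = f none from by
            simp [Finsupp.single_apply]]
          rw [show (monomial (Finsupp.single i k + prj f)) c
              = (X i ^ k) * monomial (prj f) c from by
            rw [X_pow_eq_monomial, monomial_mul, one_mul]]
          rw [map_mul]
          ring

lemma coeff_ee (f : MvPolynomial (Option (Fin s)) K) (n : ℕ) (a : Fin s →₀ ℕ) :
    MvPolynomial.coeff a (((ee K s) f).coeff n) = MvPolynomial.coeff (mk a n) f := by
  classical
  induction f using MvPolynomial.induction_on' with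
  | monomial u c =>
      rw [ee_monomial, Polynomial.coeff_C_mul, Polynomial.coeff_X_pow, mul_ite, mul_one,
        mul_zero]
      rw [apply_ite (MvPolynomial.coeff a), MvPolynomial.coeff_monomial,
        MvPolynomial.coeff_zero, MvPolynomial.coeff_monomial]
      by_cases h2 : n = u none
      · rw [if_pos h2]
        by_cases h1 : prj u = a
        · rw [if_pos h1, if_pos (mk_eq_iff.mpr ⟨h1, h2.symm⟩)]
        · rw [if_neg h1, if_neg (fun h => h1 (mk_eq_iff.mp h).1)]
      · rw [if_neg h2, if_neg (fun h => h2 ((mk_eq_iff.mp h).2).symm)]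
  | add p q hp hq =>
      rw [map_add, Polynomial.coeff_add, MvPolynomial.coeff_add, MvPolynomial.coeff_add, hp, hq]

/-- membership characterization of `filtIdeal` -/
lemma mem_filtIdeal_iff (hC : ∀ i j, 0 ≤ C i j) (n : ℕ) (g : MvPolynomial (Fin s) K) :
    g ∈ filtIdeal K C n ↔ ∀ a ∈ g.support, ∀ j, (n : ℚ) ≤ ∑ i, (a i : ℚ) * C i j := by
  classical
  rcases eq_or_ne n 0 with rfl | hn
  · rw [filtIdeal, if_pos rfl]
    simp only [Submodule.mem_top, true_iff, Nat.cast_zero]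
    intro a _ j
    exact Finset.sum_nonneg fun i _ => mul_nonneg (Nat.cast_nonneg _) (hC i j)
  · have hmemCP : ∀ a : Fin s →₀ ℕ, memCP C (fun i => (a i : ℚ) / n) ↔
        ∀ j, (n : ℚ) ≤ ∑ i, (a i : ℚ) * C i j := by
      intro a
      have hn' : (0:ℚ) < n := by
        exact_mod_cast Nat.pos_of_ne_zero hn
      constructor
      · rintro ⟨-, h2⟩ j
        have := h2 j
        rw [show (∑ i, ((a i : ℚ) / n) * C i j) = (∑ i, (a i : ℚ) * C i j) / n from by
          rw [Finset.sum_div]; exact Finset.sum_congr rfl fun i _ => by ring] at this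
        rw [le_div_iff₀ hn', one_mul] at this
        exact this
      · intro h
        refine ⟨fun i => by positivity, fun j => ?_⟩
        rw [show (∑ i, ((a i : ℚ) / n) * C i j) = (∑ i, (a i : ℚ) * C i j) / n from by
          rw [Finset.sum_div]; exact Finset.sum_congr rfl fun i _ => by ring]
        rw [le_div_iff₀ hn', one_mul]
        exact h j
    rw [filtIdeal, if_neg hn]
    constructor
    · intro hg
      -- span is contained in the "monomial support" ideal
      let I : Ideal (MvPolynomial (Fin s) K) :=
        { carrier := {g | ∀ a ∈ g.support, ∀ j, (n : ℚ) ≤ ∑ i, (a i : ℚ) * C i j}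
          zero_mem' := by intro a ha; simp at ha
          add_mem' := by
            intro p q hp hq a ha j
            rcases Finset.mem_union.mp (MvPolynomial.support_add ha) with h | h
            exacts [hp a h j, hq a h j]
          smul_mem' := by
            intro p q hq a ha j
            rw [smul_eq_mul] at ha
            rcases Finset.mem_add.mp (MvPolynomial.support_mul p q ha) with ⟨b, hb, c, hc, rfl⟩
            calc (n:ℚ) ≤ ∑ i, (c i : ℚ) * C i j := hq c hc j
            _ ≤ ∑ i, ((b + c) i : ℚ) * C i j := by
              apply Finset.sum_le_sum
              intro i _
              have : (c i : ℚ) ≤ ((b + c) i : ℚ) := by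
                simp only [Finsupp.add_apply]; push_cast; linarith [Nat.cast_nonneg (α := ℚ) (b i)]
              exact mul_le_mul_of_nonneg_right this (hC i j) }
      have hle : Ideal.span { f | ∃ a : Fin s →₀ ℕ,
          f = monomial a 1 ∧ memCP C (fun i => (a i : ℚ) / n) } ≤ I := by
        rw [Ideal.span_le]
        intro f hf
        obtain ⟨a, rfl, hcp⟩ := hf
        intro b hb j
        rw [support_monomial, if_neg (one_ne_zero)] at hb
        rw [Finset.mem_singleton] at hb
        rw [hb]
        exact (hmemCP a).mp hcp j
      exact hle hg
    · intro h
      rw [as_sum g]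
      apply Ideal.sum_mem
      intro a ha
      rw [show (monomial a) (coeff a g) = MvPolynomial.C (coeff a g) * monomial a 1 from by
        rw [C_mul_monomial, mul_one]]
      exact Ideal.mul_mem_left _ _ (Ideal.subset_span ⟨a, rfl, (hmemCP a).mpr (h a ha)⟩)

/-- the Rees algebra as a set equals the image of the `TallM`-monomial algebra -/
lemma lhs_eq_image (hC : ∀ i j, 0 ≤ C i j) :
    {f : Polynomial (MvPolynomial (Fin s) K) | ∀ n, f.coeff n ∈ filtIdeal K C n}
      = (ee K s) '' {g | ∀ d ∈ g.support, d ∈ TallM C} := by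
  ext f
  simp only [Set.mem_setOf_eq, Set.mem_image]
  constructor
  · intro hf
    refine ⟨(ee K s).symm f, ?_, (ee K s).apply_symm_apply f⟩
    intro d hd
    rw [mem_TallM]
    intro j
    have hco : MvPolynomial.coeff d ((ee K s).symm f) ≠ 0 := MvPolynomial.mem_support_iff.mp hd
    rw [← mk_prj d] at hco
    rw [← coeff_ee ((ee K s).symm f) (d none) (prj d)] at hco
    rw [(ee K s).apply_symm_apply f] at hco
    have := (mem_filtIdeal_iff C hC (d none) (f.coeff (d none))).mp (hf (d none)) (prj d)
      (MvPolynomial.mem_support_iff.mpr hco)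
    rw [wt]
    have hsum : (∑ i, ((prj d) i : ℚ) * C i j) = ∑ i, (d (some i) : ℚ) * C i j :=
      Finset.sum_congr rfl fun i _ => by rw [prj_apply]
    have := this j
    rw [hsum] at this
    linarith
  · rintro ⟨g, hg, rfl⟩
    intro n
    rw [mem_filtIdeal_iff C hC n]
    intro a ha j
    have hco : MvPolynomial.coeff (mk a n) g ≠ 0 := by
      rw [← coeff_ee g n a]
      exact MvPolynomial.mem_support_iff.mp ha
    have := (mem_TallM C).mp (hg (mk a n) (MvPolynomial.mem_support_iff.mpr hco)) j
    rw [wt] at this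
    have hsum : (∑ i, ((mk a n) (some i) : ℚ) * C i j) = ∑ i, (a i : ℚ) * C i j :=
      Finset.sum_congr rfl fun i _ => by rw [mk_some]
    rw [hsum, mk_none] at this
    linarith


section Valuation
variable (j : Fin m)

/-- lower bound on the weights of the support -/
def bnd (r : ℚ) (f : MvPolynomial (Option (Fin s)) K) : Prop :=
  ∀ d ∈ f.support, r ≤ wt C j d

/-- the weight `r` is attained on the support -/
def att (r : ℚ) (f : MvPolynomial (Option (Fin s)) K) : Prop :=
  ∃ d ∈ f.support, wt C j d = r

lemma bnd_mul {r t : ℚ} {f g : MvPolynomial (Option (Fin s)) K}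
    (hf : bnd C j r f) (hg : bnd C j t g) : bnd C j (r + t) (f * g) := by
  classical
  intro d hd
  rcases Finset.mem_add.mp (MvPolynomial.support_mul f g hd) with ⟨b, hb, c, hc, rfl⟩
  rw [wt_add]
  exact add_le_add (hf b hb) (hg c hc)

lemma bnd_one : bnd C j 0 (1 : MvPolynomial (Option (Fin s)) K) := by
  intro d hd
  classical
  have : coeff d (1 : MvPolynomial (Option (Fin s)) K) ≠ 0 := MvPolynomial.mem_support_iff.mp hd
  rw [show (1 : MvPolynomial (Option (Fin s)) K) = MvPolynomial.C 1 from rfl, coeff_C] at this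
  have hd0 : d = 0 := by
    by_contra h
    exact this (by simp [Ne.symm h])
  rw [hd0, wt_zero]

lemma bnd_pow {r : ℚ} {f : MvPolynomial (Option (Fin s)) K} (hf : bnd C j r f) (k : ℕ) :
    bnd C j (k * r) (f ^ k) := by
  induction k with
  | zero => rw [pow_zero]; push_cast; rw [zero_mul]; exact bnd_one C j
  | succ k ih =>
      rw [pow_succ]
      have := bnd_mul C j ih hf
      rwa [show ((k:ℚ) * r + r) = ((k+1 : ℕ) : ℚ) * r from by push_cast; ring] at this

/-- restriction of a polynomial to a set of exponents -/
def restr (f : MvPolynomial (Option (Fin s)) K) (S : Finset (D s)) :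
    MvPolynomial (Option (Fin s)) K :=
  ∑ d ∈ S, monomial d (coeff d f)

lemma coeff_restr (f : MvPolynomial (Option (Fin s)) K) (S : Finset (D s)) (d : D s) :
    coeff d (restr f S) = if d ∈ S then coeff d f else 0 := by
  classical
  rw [restr, MvPolynomial.coeff_sum]
  rw [Finset.sum_congr rfl (fun e _ => MvPolynomial.coeff_monomial d e (coeff e f))]
  rw [Finset.sum_ite_eq' S d (fun e => coeff e f)]

lemma mul_attains {r t : ℚ} {f g : MvPolynomial (Option (Fin s)) K}
    (hf0 : f ≠ 0) (hg0 : g ≠ 0)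
    (hbf : bnd C j r f) (haf : att C j r f) (hbg : bnd C j t g) (hag : att C j t g) :
    att C j (r + t) (f * g) := by
  classical
  set S0f := f.support.filter (fun d => wt C j d = r) with hS0f
  set S1f := f.support.filter (fun d => ¬ wt C j d = r) with hS1f
  set S0g := g.support.filter (fun d => wt C j d = t) with hS0g
  set S1g := g.support.filter (fun d => ¬ wt C j d = t) with hS1g
  set f₀ := restr f S0f with hf₀
  set f₁ := restr f S1f with hf₁
  set g₀ := restr g S0g with hg₀
  set g₁ := restr g S1g with hg₁
  have hfd : f = f₀ + f₁ := by
    apply MvPolynomial.ext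
    intro d
    rw [MvPolynomial.coeff_add, hf₀, hf₁, coeff_restr, coeff_restr]
    by_cases hd : d ∈ f.support
    · by_cases hw : wt C j d = r
      · have h1 : d ∈ S0f := Finset.mem_filter.mpr ⟨hd, hw⟩
        have h2 : d ∉ S1f := fun h => (Finset.mem_filter.mp h).2 hw
        rw [if_pos h1, if_neg h2, add_zero]
      · have h1 : d ∉ S0f := fun h => hw (Finset.mem_filter.mp h).2
        have h2 : d ∈ S1f := Finset.mem_filter.mpr ⟨hd, hw⟩
        rw [if_neg h1, if_pos h2, zero_add]
    · have h0 : coeff d f = 0 := of_not_not (fun h => hd (MvPolynomial.mem_support_iff.mpr h))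
      rw [h0]
      split <;> split <;> simp
  have hgd : g = g₀ + g₁ := by
    apply MvPolynomial.ext
    intro d
    rw [MvPolynomial.coeff_add, hg₀, hg₁, coeff_restr, coeff_restr]
    by_cases hd : d ∈ g.support
    · by_cases hw : wt C j d = t
      · have h1 : d ∈ S0g := Finset.mem_filter.mpr ⟨hd, hw⟩
        have h2 : d ∉ S1g := fun h => (Finset.mem_filter.mp h).2 hw
        rw [if_pos h1, if_neg h2, add_zero]
      · have h1 : d ∉ S0g := fun h => hw (Finset.mem_filter.mp h).2
        have h2 : d ∈ S1g := Finset.mem_filter.mpr ⟨hd, hw⟩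
        rw [if_neg h1, if_pos h2, zero_add]
    · have h0 : coeff d g = 0 := of_not_not (fun h => hd (MvPolynomial.mem_support_iff.mpr h))
      rw [h0]
      split <;> split <;> simp
  have hsupf₀ : f₀.support ⊆ S0f := by
    intro d hd
    have := MvPolynomial.mem_support_iff.mp hd
    rw [hf₀, coeff_restr] at this
    by_contra h
    rw [if_neg h] at this
    exact this rfl
  have hsupf₁ : f₁.support ⊆ S1f := by
    intro d hd
    have := MvPolynomial.mem_support_iff.mp hd
    rw [hf₁, coeff_restr] at this
    by_contra h
    rw [if_neg h] at this
    exact this rfl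
  have hsupg₀ : g₀.support ⊆ S0g := by
    intro d hd
    have := MvPolynomial.mem_support_iff.mp hd
    rw [hg₀, coeff_restr] at this
    by_contra h
    rw [if_neg h] at this
    exact this rfl
  have hsupg₁ : g₁.support ⊆ S1g := by
    intro d hd
    have := MvPolynomial.mem_support_iff.mp hd
    rw [hg₁, coeff_restr] at this
    by_contra h
    rw [if_neg h] at this
    exact this rfl
  have hf₀ne : f₀ ≠ 0 := by
    obtain ⟨d', hd', hw'⟩ := haf
    have : coeff d' f₀ ≠ 0 := by
      rw [hf₀, coeff_restr, if_pos (Finset.mem_filter.mpr ⟨hd', hw'⟩)]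
      exact MvPolynomial.mem_support_iff.mp hd'
    exact fun h => this (by rw [h]; simp)
  have hg₀ne : g₀ ≠ 0 := by
    obtain ⟨d', hd', hw'⟩ := hag
    have : coeff d' g₀ ≠ 0 := by
      rw [hg₀, coeff_restr, if_pos (Finset.mem_filter.mpr ⟨hd', hw'⟩)]
      exact MvPolynomial.mem_support_iff.mp hd'
    exact fun h => this (by rw [h]; simp)
  -- an exponent of f₀ * g₀
  have hne : f₀ * g₀ ≠ 0 := mul_ne_zero hf₀ne hg₀ne
  obtain ⟨e, he⟩ := Finset.nonempty_iff_ne_empty.mpr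
    (fun h => hne (MvPolynomial.support_eq_empty.mp h))
  have hwe : wt C j e = r + t := by
    rcases Finset.mem_add.mp (MvPolynomial.support_mul f₀ g₀ he) with ⟨b, hb, c, hc, rfl⟩
    rw [wt_add, (Finset.mem_filter.mp (hsupf₀ hb)).2, (Finset.mem_filter.mp (hsupg₀ hc)).2]
  -- strict bounds on the other pieces
  have hstrict : ∀ h : MvPolynomial (Option (Fin s)) K,
      (∀ d ∈ h.support, r + t < wt C j d) → e ∉ h.support := by
    intro h hstr he'
    exact absurd hwe (ne_of_gt (hstr e he'))
  have hkey : coeff e (f * g) = coeff e (f₀ * g₀) := by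
    have hexp : f * g = f₀ * g₀ + (f₀ * g₁ + (f₁ * g₀ + f₁ * g₁)) := by
      rw [hfd, hgd]  -- careful: f appears in f₀'s definition; conv may loop
      ring
    rw [hexp, MvPolynomial.coeff_add, MvPolynomial.coeff_add, MvPolynomial.coeff_add]
    have h1 : coeff e (f₀ * g₁) = 0 := by
      rw [← MvPolynomial.notMem_support_iff]
      apply hstrict
      intro d hd
      rcases Finset.mem_add.mp (MvPolynomial.support_mul f₀ g₁ hd) with ⟨b, hb, c, hc, rfl⟩
      rw [wt_add]
      have hbr : wt C j b = r := (Finset.mem_filter.mp (hsupf₀ hb)).2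
      have hcmem := Finset.mem_filter.mp (hsupg₁ hc)
      have hct : t < wt C j c := lt_of_le_of_ne (hbg c hcmem.1) (Ne.symm hcmem.2)
      linarith
    have h2 : coeff e (f₁ * g₀) = 0 := by
      rw [← MvPolynomial.notMem_support_iff]
      apply hstrict
      intro d hd
      rcases Finset.mem_add.mp (MvPolynomial.support_mul f₁ g₀ hd) with ⟨b, hb, c, hc, rfl⟩
      rw [wt_add]
      have hbmem := Finset.mem_filter.mp (hsupf₁ hb)
      have hbr : r < wt C j b := lt_of_le_of_ne (hbf b hbmem.1) (Ne.symm hbmem.2)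
      have hct : wt C j c = t := (Finset.mem_filter.mp (hsupg₀ hc)).2
      linarith
    have h3 : coeff e (f₁ * g₁) = 0 := by
      rw [← MvPolynomial.notMem_support_iff]
      apply hstrict
      intro d hd
      rcases Finset.mem_add.mp (MvPolynomial.support_mul f₁ g₁ hd) with ⟨b, hb, c, hc, rfl⟩
      rw [wt_add]
      have hbmem := Finset.mem_filter.mp (hsupf₁ hb)
      have hbr : r < wt C j b := lt_of_le_of_ne (hbf b hbmem.1) (Ne.symm hbmem.2)
      have hcmem := Finset.mem_filter.mp (hsupg₁ hc)
      have hct : t < wt C j c := lt_of_le_of_ne (hbg c hcmem.1) (Ne.symm hcmem.2)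
      linarith
    rw [h1, h2, h3]
    ring
  refine ⟨e, ?_, hwe⟩
  rw [MvPolynomial.mem_support_iff, hkey]
  exact MvPolynomial.mem_support_iff.mp he

lemma pow_attains {r : ℚ} {f : MvPolynomial (Option (Fin s)) K} (hf0 : f ≠ 0)
    (hbf : bnd C j r f) (haf : att C j r f) (k : ℕ) :
    att C j (k * r) (f ^ k) := by
  induction k with
  | zero =>
      rw [pow_zero]
      refine ⟨0, ?_, ?_⟩
      · rw [MvPolynomial.mem_support_iff]
        rw [show (1 : MvPolynomial (Option (Fin s)) K) = MvPolynomial.C 1 from rfl, coeff_C]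
        simp
      · rw [wt_zero]; push_cast; ring
  | succ k ih =>
      rw [pow_succ]
      have := mul_attains C j (pow_ne_zero k hf0) hf0 (bnd_pow C j hbf k) ih hbf haf
      rwa [show ((k:ℚ) * r + r) = ((k+1 : ℕ) : ℚ) * r from by push_cast; ring] at this

/-- key step: integrality over the weight-bounded subring forces the weight bound -/
lemma int_closed_wt (p : MvPolynomial (Option (Fin s)) K) (k : ℕ) (hk : k ≠ 0)
    (c : ℕ → MvPolynomial (Option (Fin s)) K)
    (hc : ∀ i, bnd C j 0 (c i))
    (heq : p ^ k = -(∑ i ∈ Finset.range k, c i * p ^ i)) :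
    bnd C j 0 p := by
  classical
  by_cases hp0 : p = 0
  · subst hp0; intro d hd; simp at hd
  by_contra hneg
  rw [bnd] at hneg
  push_neg at hneg
  obtain ⟨d0, hd0, hd0w⟩ := hneg
  obtain ⟨dm, hdm, hmin⟩ := Finset.exists_min_image p.support (wt C j) ⟨d0, hd0⟩
  set v := wt C j dm with hv
  have hvneg : v < 0 := lt_of_le_of_lt (hmin d0 hd0) hd0w
  have hbp : bnd C j v p := fun d hd => hmin d hd
  have hap : att C j v p := ⟨dm, hdm, rfl⟩
  obtain ⟨e, he, hwe⟩ := pow_attains C j hp0 hbp hap k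
  rw [heq] at he
  rw [MvPolynomial.support_neg] at he
  obtain ⟨i, hi, hei⟩ := Finset.mem_biUnion.mp (MvPolynomial.support_sum he)
  have hbnd_i : bnd C j (0 + i * v) (c i * p ^ i) := bnd_mul C j (hc i) (bnd_pow C j hbp i)
  have h1 : (0 : ℚ) + i * v ≤ wt C j e := hbnd_i e hei
  have h3 : (i : ℚ) < k := by exact_mod_cast Finset.mem_range.mp hi
  have h4 : (i : ℚ) * v ≤ wt C j e := by linarith
  rw [hwe] at h4
  nlinarith [mul_pos (sub_pos.mpr h3) (neg_pos.mpr hvneg)]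
end Valuation

/-- the monomial algebra of the Simis cone is integrally closed in the polynomial ring -/
lemma monoSub_int_closed (p : MvPolynomial (Option (Fin s)) K)
    (hp : IsIntegral ↥(monoSub K (TallM C)) p) : p ∈ monoSub K (TallM C) := by
  classical
  obtain ⟨q, hmq, hev⟩ := hp
  set q' : Polynomial (MvPolynomial (Option (Fin s)) K) :=
    q.map (algebraMap ↥(monoSub K (TallM C)) _) with hq'
  have hmq' : q'.Monic := hmq.map _
  have heval : q'.eval p = 0 := by
    rw [hq', Polynomial.eval_map]; exact hev
  have hk : q'.natDegree ≠ 0 := by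
    intro h
    have h1 : q' = 1 := (Polynomial.Monic.natDegree_eq_zero hmq').mp h
    rw [h1, Polynomial.eval_one] at heval
    exact one_ne_zero heval
  have hsplit : p ^ q'.natDegree
      = -(∑ i ∈ Finset.range q'.natDegree, q'.coeff i * p ^ i) := by
    have h1 := Polynomial.eval_eq_sum_range (p := q') (x := p)
    rw [Finset.sum_range_succ, hmq'.coeff_natDegree, one_mul] at h1
    have h2 : (∑ i ∈ Finset.range q'.natDegree, q'.coeff i * p ^ i) + p ^ q'.natDegree = 0 := by
      rw [← h1, heval]
    exact eq_neg_of_add_eq_zero_right h2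
  intro d hd
  rw [mem_TallM]
  intro j
  refine int_closed_wt C j p _ hk (fun i => q'.coeff i) ?_ hsplit d hd
  intro i d' hd'
  have hco : q'.coeff i ∈ monoSub K (TallM C) := by
    rw [hq', Polynomial.coeff_map]
    exact (q.coeff i).2
  exact (hco d' hd') j

/-- multiplier monomial clearing the `z`-degrees of `p` into the cone -/
lemma exists_mult (hC : ∀ i j, 0 ≤ C i j) (hcol : ∀ j, ∃ i, C i j ≠ 0)
    (p : MvPolynomial (Option (Fin s)) K) :
    ∃ r, r ∈ monoSub K (TallM C) ∧ p * r ∈ monoSub K (TallM C) ∧ r ≠ 0 := by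
  classical
  have hσ : ∀ j, 0 < ∑ i, C i j := by
    intro j
    obtain ⟨i0, hi0⟩ := hcol j
    have h0 : 0 < C i0 j := lt_of_le_of_ne (hC i0 j) (Ne.symm hi0)
    exact Finset.sum_pos' (fun i _ => hC i j) ⟨i0, Finset.mem_univ i0, h0⟩
  set Dm : ℕ := p.support.sup (fun d => d none) with hDm
  have hble : ∀ d ∈ p.support, d none ≤ Dm := fun d hd =>
    Finset.le_sup (f := fun d : D s => d none) hd
  have hNj : ∀ j : Fin m, ∃ Nj : ℕ, (Dm : ℚ) ≤ Nj * ∑ i, C i j := by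
    intro j
    obtain ⟨Nj, hN⟩ := exists_nat_ge ((Dm : ℚ) / ∑ i, C i j)
    refine ⟨Nj, ?_⟩
    rw [div_le_iff₀ (hσ j)] at hN
    linarith
  choose Nf hNf using hNj
  set N : ℕ := Finset.univ.sup Nf with hN
  set dN : D s := Finsupp.equivFunOnFinite.symm (fun o => o.elim 0 (fun _ => N)) with hdN
  have hdNnone : dN none = 0 := rfl
  have hdNsome : ∀ i, dN (some i) = N := fun i => rfl
  have hwtdN : ∀ j, wt C j dN = N * ∑ i, C i j := by
    intro j
    rw [wt, hdNnone, Finset.mul_sum]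
    push_cast
    rw [sub_zero]
    exact Finset.sum_congr rfl fun i _ => by rw [hdNsome]
  have hwtdN_ge : ∀ j, (Dm:ℚ) ≤ wt C j dN := by
    intro j
    rw [hwtdN]
    calc (Dm:ℚ) ≤ Nf j * ∑ i, C i j := hNf j
    _ ≤ N * ∑ i, C i j := by
      apply mul_le_mul_of_nonneg_right _ (le_of_lt (hσ j))
      exact_mod_cast Finset.le_sup (f := Nf) (Finset.mem_univ j)
  refine ⟨monomial dN 1, ?_, ?_, ?_⟩
  · intro d hd
    rw [support_monomial, if_neg one_ne_zero, Finset.mem_singleton] at hd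
    rw [hd, mem_TallM]
    intro j
    rw [hwtdN j]
    exact mul_nonneg (Nat.cast_nonneg _) (le_of_lt (hσ j))
  · intro d hd
    rcases Finset.mem_add.mp (MvPolynomial.support_mul _ _ hd) with ⟨b, hb, c, hc, rfl⟩
    rw [support_monomial, if_neg one_ne_zero, Finset.mem_singleton] at hc
    rw [hc, mem_TallM]
    intro j
    rw [wt_add]
    have h1 : -(Dm:ℚ) ≤ wt C j b := by
      rw [wt]
      have hb1 : (b none : ℚ) ≤ Dm := by exact_mod_cast hble b hb
      have hb2 : 0 ≤ ∑ i, (b (some i):ℚ) * C i j :=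
        Finset.sum_nonneg fun i _ => mul_nonneg (Nat.cast_nonneg _) (hC i j)
      linarith
    linarith [hwtdN_ge j]
  · intro h
    have h2 := congrArg (coeff dN) h
    rw [coeff_monomial, if_pos rfl] at h2
    simp at h2

/-- a subalgebra of an integrally closed domain, with the same fraction field, closed
under integral elements, is integrally closed -/
lemma subalg_ic {P : Type*} [CommRing P] [IsDomain P] [Algebra K P] [IsIntegrallyClosed P]
    (A : Subalgebra K P)
    (hmul : ∀ p : P, ∃ r : P, r ∈ A ∧ p * r ∈ A ∧ r ≠ 0)
    (hcl : ∀ p : P, IsIntegral ↥A p → p ∈ A) : IsIntegrallyClosed ↥A := by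
  classical
  set L := FractionRing P with hL
  have hφinj : Function.Injective (algebraMap P L) := IsFractionRing.injective P L
  have hAL : ∀ x : ↥A, algebraMap ↥A L x = algebraMap P L (x : P) := by
    intro x
    rw [IsScalarTower.algebraMap_apply ↥A P L]
    rfl
  haveI hFR : IsFractionRing ↥A L := by
    refine { map_units := ?_, surj := ?_, exists_of_eq := ?_ }
    · rintro ⟨y, hy⟩
      have hy0 : y ≠ 0 := nonZeroDivisors.ne_zero hy
      have hyP : (y : P) ≠ 0 := fun h => hy0 (Subtype.coe_injective (by simpa using h))
      have : algebraMap ↥A L y = algebraMap P L (y : P) := hAL y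
      rw [show ((⟨y, hy⟩ : nonZeroDivisors ↥A) : ↥A) = y from rfl, this]
      apply isUnit_iff_ne_zero.mpr
      intro h0
      exact hyP (hφinj (h0.trans (map_zero (algebraMap P L)).symm))
    · intro z
      obtain ⟨⟨n, dd⟩, hnd⟩ := IsLocalization.surj (nonZeroDivisors P) z
      obtain ⟨r₁, hr₁A, hnr₁, hr₁0⟩ := hmul n
      obtain ⟨r₂, hr₂A, hdr₂, hr₂0⟩ := hmul (dd : P)
      have hnumA : n * (r₁ * r₂) ∈ A := by
        rw [show n * (r₁ * r₂) = (n * r₁) * r₂ from by ring]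
        exact A.mul_mem hnr₁ hr₂A
      have hdenA : (dd : P) * (r₁ * r₂) ∈ A := by
        rw [show (dd : P) * (r₁ * r₂) = ((dd : P) * r₂) * r₁ from by ring]
        exact A.mul_mem hdr₂ hr₁A
      have hdd0 : (dd : P) ≠ 0 := nonZeroDivisors.ne_zero dd.2
      have hden0 : (dd : P) * (r₁ * r₂) ≠ 0 :=
        mul_ne_zero hdd0 (mul_ne_zero hr₁0 hr₂0)
      have hdenNZD : (⟨(dd : P) * (r₁ * r₂), hdenA⟩ : ↥A) ∈ nonZeroDivisors ↥A := by
        apply mem_nonZeroDivisors_of_ne_zero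
        intro h
        exact hden0 (congrArg (fun z : ↥A => (z : P)) h)
      refine ⟨⟨⟨n * (r₁ * r₂), hnumA⟩, ⟨_, hdenNZD⟩⟩, ?_⟩
      rw [hAL, hAL]
      show z * (algebraMap P L) ((dd : P) * (r₁ * r₂)) = (algebraMap P L) (n * (r₁ * r₂))
      rw [map_mul, map_mul, ← mul_assoc]
      rw [show z * (algebraMap P L) (dd : P) = (algebraMap P L) n from hnd]
      rw [map_mul, map_mul]
    · intro x y h
      have : (x : P) = (y : P) := hφinj h
      exact ⟨1, by rw [Subtype.ext this]⟩
  rw [isIntegrallyClosed_iff L]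
  intro x hx
  have hxP : IsIntegral P x := IsIntegral.tower_top hx
  obtain ⟨p, hp⟩ := IsIntegrallyClosed.isIntegral_iff.mp hxP
  have hxA' : IsIntegral ↥A ((algebraMap P L) p) := hp ▸ hx
  have hpA : IsIntegral ↥A p := (isIntegral_algebraMap_iff hφinj).mp hxA'
  exact ⟨⟨p, hcl p hpA⟩, hp⟩

/-- closure of the mapped subalgebra under integral elements -/
lemma hcl_map (p : Polynomial (MvPolynomial (Fin s) K))
    (hp : IsIntegral ↥(Subalgebra.map (ee K s).toAlgHom (monoSub K (TallM C))) p) :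
    p ∈ Subalgebra.map (ee K s).toAlgHom (monoSub K (TallM C)) := by
  classical
  obtain ⟨q, hmq, hev⟩ := hp
  have hmem : ∀ x : Polynomial (MvPolynomial (Fin s) K),
      x ∈ Subalgebra.map (ee K s).toAlgHom (monoSub K (TallM C)) →
      (ee K s).symm x ∈ monoSub K (TallM C) := by
    intro x hx
    obtain ⟨y, hy, hxy⟩ := hx
    rw [← hxy]
    show (ee K s).symm ((ee K s) y) ∈ monoSub K (TallM C)
    rw [(ee K s).symm_apply_apply y]
    exact hy
  set φ : ↥(Subalgebra.map (ee K s).toAlgHom (monoSub K (TallM C))) →+* ↥(monoSub K (TallM C)) :=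
    { toFun := fun x => ⟨(ee K s).symm x.1, hmem x.1 x.2⟩
      map_one' := Subtype.ext (by simp)
      map_mul' := fun x y => Subtype.ext (by simp)
      map_zero' := Subtype.ext (by simp)
      map_add' := fun x y => Subtype.ext (by simp) } with hφ
  have hint : IsIntegral ↥(monoSub K (TallM C)) ((ee K s).symm p) := by
    refine ⟨q.map φ, hmq.map φ, ?_⟩
    rw [Polynomial.eval₂_map]
    have hcomp : (algebraMap ↥(monoSub K (TallM C)) (MvPolynomial (Option (Fin s)) K)).comp φ
        = ((ee K s).symm.toAlgHom.toRingHom).comp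
            (algebraMap ↥(Subalgebra.map (ee K s).toAlgHom (monoSub K (TallM C)))
              (Polynomial (MvPolynomial (Fin s) K))) := RingHom.ext fun x => rfl
    rw [hcomp]
    rw [show (ee K s).symm p = (ee K s).symm.toAlgHom.toRingHom p from rfl]
    rw [← Polynomial.hom_eval₂, hev, map_zero]
  refine ⟨_, monoSub_int_closed C _ hint, ?_⟩
  show (ee K s) ((ee K s).symm p) = p
  exact (ee K s).apply_symm_apply p



variable {K : Type*} [Field K] {s m : ℕ} (C : Matrix (Fin s) (Fin m) ℚ)

lemma reesGen_eq :
    reesGen K C = ⇑(ee K s).toAlgHom '' ((fun d => monomial d (1:K)) '' hilbSet C) := by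
  ext f
  constructor
  · rintro ⟨a, n, hh, rfl⟩
    refine ⟨monomial (mk a n) 1, ⟨mk a n, ?_, rfl⟩, ?_⟩
    · show hilbMem C (zpair (mk a n))
      have hz : zpair (mk a n) = (fun i => (a i : ℤ), (n : ℤ)) := by
        unfold zpair
        refine Prod.ext ?_ ?_
        · funext i
          show ((mk a n) (some i) : ℤ) = ((a i : ℕ) : ℤ)
          rw [mk_some]
        · show ((mk a n) none : ℤ) = (n : ℤ)
          rw [mk_none]
      rw [hz]; exact hh
    · show (ee K s) (monomial (mk a n) 1) = _
      rw [ee_monomial, prj_mk, mk_none]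
  · rintro ⟨f', ⟨d, hd, rfl⟩, rfl⟩
    refine ⟨prj d, d none, ?_, ?_⟩
    · have hz : (fun i => ((prj d) i : ℤ), ((d none : ℕ) : ℤ)) = zpair d := by
        unfold zpair
        refine Prod.ext ?_ ?_
        · funext i
          show ((prj d) i : ℤ) = (d (some i) : ℤ)
          rw [prj_apply]
        · rfl
      show hilbMem C (fun i => ((prj d) i : ℤ), ((d none : ℕ) : ℤ))
      rw [hz]; exact hd
    · show (ee K s) (monomial d 1) = _
      rw [ee_monomial]


end S13

set_option synthInstance.maxHeartbeats 1000000 in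
/-- The Rees algebra `R(F) = ⊕ I_n z^n` of the filtration of a covering polyhedron equals
the semigroup ring `K[ℕH]` (the `K`-algebra generated by the monomials with exponents in
the Hilbert basis `H` of the Simis cone), and it is a finitely generated normal
`K`-algebra. -/
theorem stmt13 {K : Type*} [Field K] {s m : ℕ} (C : Matrix (Fin s) (Fin m) ℚ)
    (hC : ∀ i j, 0 ≤ C i j) (hcol : ∀ j, ∃ i, C i j ≠ 0) :
    {f : Polynomial (MvPolynomial (Fin s) K) | ∀ n, f.coeff n ∈ filtIdeal K C n} =
        (Algebra.adjoin K (reesGen K C) : Set (Polynomial (MvPolynomial (Fin s) K))) ∧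
      (Algebra.adjoin K (reesGen K C)).FG ∧
      IsIntegrallyClosed ↥(Algebra.adjoin K (reesGen K C)) := by
  classical
  have hsub : S13.hilbSet C ⊆ ↑(S13.TallM C) := by
    intro d hd
    rw [← S13.closure_hilb_eq_tall C]
    exact AddSubmonoid.subset_closure hd
  have hgen : ∀ d ∈ S13.TallM C, d ∈ AddSubmonoid.closure (S13.hilbSet C) := by
    intro d hd; rw [S13.closure_hilb_eq_tall C]; exact hd
  have hadj := S13.adjoin_eq_monoSub (K := K) hsub hgen
  have hkey : Algebra.adjoin K (reesGen K C)
      = Subalgebra.map (S13.ee K s).toAlgHom (S13.monoSub K (S13.TallM C)) := by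
    rw [S13.reesGen_eq C, ← AlgHom.map_adjoin, hadj]
  obtain ⟨F, hFfin, hFcl⟩ := S13.tall_fg C
  have hsubF : F ⊆ ↑(S13.TallM C) := by
    intro d hd; rw [← hFcl]; exact AddSubmonoid.subset_closure hd
  have hgenF : ∀ d ∈ S13.TallM C, d ∈ AddSubmonoid.closure F := by
    intro d hd; rw [hFcl]; exact hd
  have hadjF := S13.adjoin_eq_monoSub (K := K) hsubF hgenF
  refine ⟨?_, ?_, ?_⟩
  · rw [hkey, S13.lhs_eq_image C hC]
    rfl
  · rw [hkey, ← hadjF, AlgHom.map_adjoin]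
    exact Subalgebra.fg_def.mpr ⟨_, ((hFfin.image _).image _), rfl⟩
  · rw [hkey]
    haveI hic : IsIntegrallyClosed (Polynomial (MvPolynomial (Fin s) K)) := inferInstance
    refine S13.subalg_ic _ ?_ (fun p hp => S13.hcl_map C p hp)
    intro p
    obtain ⟨r, hr, hpr, hr0⟩ := S13.exists_mult C hC hcol ((S13.ee K s).symm p)
    refine ⟨(S13.ee K s) r, ?_, ?_, ?_⟩
    · exact Subalgebra.mem_map.mpr ⟨r, hr, rfl⟩
    · refine Subalgebra.mem_map.mpr ⟨(S13.ee K s).symm p * r, hpr, ?_⟩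
      show (S13.ee K s) ((S13.ee K s).symm p * r) = _
      rw [map_mul, (S13.ee K s).apply_symm_apply]
    · intro h
      exact hr0 ((S13.ee K s).injective (by rw [h, map_zero]))
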